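/- Let d ≥ 1 and let f : ℝ^d → ℝ be differentiable on X = [0,1]^d with continuous gradient ∇f that is β-Lipschitz on X, i.e. ‖∇f(x) − ∇f(y)‖ ≤ β‖x − y‖ for all x, y ∈ X. Define g : X → ℝ^d by g(x) = ∫_0^1 e^{z−1} · ∇f(z x) dz. Then g is (β/e)-Lipschitz on X: ‖g(x) − g(y)‖ ≤ (β/e)‖x − y‖ for all x, y ∈ X. -/

import Mathlib

open MeasureTheory Finset

noncomputable section

def cube (d : ℕ) : Set (EuclideanSpace ℝ (Fin d)) :=
  {x | ∀ i, x i ∈ Set.Icc (0 : ℝ) 1}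

def DRSubmodularOn (d : ℕ) (f : EuclideanSpace ℝ (Fin d) → ℝ) : Prop :=
  ∀ x y : EuclideanSpace ℝ (Fin d), x ∈ cube d → y ∈ cube d → (∀ i, x i ≤ y i) →
    ∀ (j : Fin d) (z : ℝ), 0 ≤ z →
      x + z • EuclideanSpace.single j (1 : ℝ) ∈ cube d →
      y + z • EuclideanSpace.single j (1 : ℝ) ∈ cube d →
      f (y + z • EuclideanSpace.single j (1 : ℝ)) - f y ≤
        f (x + z • EuclideanSpace.single j (1 : ℝ)) - f x

lemma smul_mem_cube {d : ℕ} {x : EuclideanSpace ℝ (Fin d)} (hx : x ∈ cube d)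
    {z : ℝ} (hz : z ∈ Set.Icc (0:ℝ) 1) : z • x ∈ cube d := by
  intro i
  have := hx i
  constructor
  · exact mul_nonneg hz.1 this.1
  · calc z * x i ≤ 1 * 1 := mul_le_mul hz.2 this.2 this.1 one_pos.le
      _ = 1 := one_mul 1

lemma cont_integrand {d : ℕ} {f' : EuclideanSpace ℝ (Fin d) → EuclideanSpace ℝ (Fin d)}
    (hcont : ContinuousOn f' (cube d)) {x : EuclideanSpace ℝ (Fin d)} (hx : x ∈ cube d) :
    ContinuousOn (fun z : ℝ => Real.exp (z - 1) • f' (z • x)) (Set.Icc 0 1) := by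
  refine ContinuousOn.smul (f := fun z : ℝ => Real.exp (z - 1)) (g := fun z : ℝ => f' (z • x)) ?_ ?_
  · exact (Real.continuous_exp.comp (continuous_id.sub continuous_const)).continuousOn
  · apply hcont.comp (by fun_prop) (fun z hz => smul_mem_cube hx hz)

lemma int_z_exp : (∫ z in (0:ℝ)..1, z * Real.exp (z - 1)) = Real.exp (-1 : ℝ) := by
  have h : ∀ z ∈ Set.uIcc (0:ℝ) 1,
      HasDerivAt (fun z : ℝ => (z - 1) * Real.exp (z - 1)) (z * Real.exp (z - 1)) z := by
    intro z _
    have h1 : HasDerivAt (fun z : ℝ => z - 1) 1 z := (hasDerivAt_id z).sub_const 1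
    have : HasDerivAt (fun z : ℝ => (z - 1) * Real.exp (z - 1))
        (1 * Real.exp (z - 1) + (z - 1) * (Real.exp (z - 1) * 1)) z := h1.mul h1.exp
    convert this using 1
    ring
  have hint : IntervalIntegrable (fun z : ℝ => z * Real.exp (z - 1)) volume 0 1 :=
    (by fun_prop : Continuous fun z : ℝ => z * Real.exp (z - 1)).intervalIntegrable 0 1
  rw [intervalIntegral.integral_eq_sub_of_hasDerivAt h hint]
  norm_num

theorem boosting_monotone_gradient_lipschitz
    (d : ℕ) (hd : 1 ≤ d)
    (β : ℝ)
    (f : EuclideanSpace ℝ (Fin d) → ℝ)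
    (f' : EuclideanSpace ℝ (Fin d) → EuclideanSpace ℝ (Fin d))
    (hgrad : ∀ x ∈ cube d, HasGradientWithinAt f (f' x) (cube d) x)
    (hcont : ContinuousOn f' (cube d))
    (hlip : ∀ x ∈ cube d, ∀ y ∈ cube d, ‖f' x - f' y‖ ≤ β * ‖x - y‖)
    (g : EuclideanSpace ℝ (Fin d) → EuclideanSpace ℝ (Fin d))
    (hg : ∀ x ∈ cube d, g x = ∫ z in (0:ℝ)..1, Real.exp (z - 1) • f' (z • x)) :
    ∀ x ∈ cube d, ∀ y ∈ cube d, ‖g x - g y‖ ≤ (β / Real.exp 1) * ‖x - y‖ := by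
  intro x hx y hy
  have huIcc : Set.uIcc (0:ℝ) 1 = Set.Icc 0 1 := Set.uIcc_of_le zero_le_one
  have hIx : IntervalIntegrable (fun z : ℝ => Real.exp (z - 1) • f' (z • x)) volume 0 1 :=
    (huIcc ▸ cont_integrand hcont hx).intervalIntegrable
  have hIy : IntervalIntegrable (fun z : ℝ => Real.exp (z - 1) • f' (z • y)) volume 0 1 :=
    (huIcc ▸ cont_integrand hcont hy).intervalIntegrable
  rw [hg x hx, hg y hy, ← intervalIntegral.integral_sub hIx hIy]
  have key : ∀ z ∈ Set.Icc (0:ℝ) 1,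
      ‖Real.exp (z - 1) • f' (z • x) - Real.exp (z - 1) • f' (z • y)‖ ≤
        (β * ‖x - y‖) * (z * Real.exp (z - 1)) := by
    intro z hz
    rw [← smul_sub, norm_smul, Real.norm_eq_abs, abs_of_pos (Real.exp_pos _)]
    have h1 : ‖f' (z • x) - f' (z • y)‖ ≤ β * ‖z • x - z • y‖ :=
      hlip _ (smul_mem_cube hx hz) _ (smul_mem_cube hy hz)
    have h2 : ‖z • x - z • y‖ = z * ‖x - y‖ := by
      rw [← smul_sub, norm_smul, Real.norm_eq_abs, abs_of_nonneg hz.1]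
    calc Real.exp (z - 1) * ‖f' (z • x) - f' (z • y)‖
        ≤ Real.exp (z - 1) * (β * (z * ‖x - y‖)) := by
          apply mul_le_mul_of_nonneg_left _ (Real.exp_pos _).le
          rw [← h2]; exact h1
      _ = (β * ‖x - y‖) * (z * Real.exp (z - 1)) := by ring
  calc ‖∫ z in (0:ℝ)..1, (Real.exp (z - 1) • f' (z • x) - Real.exp (z - 1) • f' (z • y))‖
      ≤ ∫ z in (0:ℝ)..1, ‖Real.exp (z - 1) • f' (z • x) - Real.exp (z - 1) • f' (z • y)‖ :=
        intervalIntegral.norm_integral_le_integral_norm zero_le_one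
    _ ≤ ∫ z in (0:ℝ)..1, (β * ‖x - y‖) * (z * Real.exp (z - 1)) := by
        apply intervalIntegral.integral_mono_on zero_le_one _ _ key
        · exact (hIx.sub hIy).norm
        · exact (by fun_prop : Continuous fun z : ℝ =>
            (β * ‖x - y‖) * (z * Real.exp (z - 1))).intervalIntegrable 0 1
    _ = (β * ‖x - y‖) * Real.exp (-1) := by
        rw [intervalIntegral.integral_const_mul, int_z_exp]
    _ = (β / Real.exp 1) * ‖x - y‖ := by
        rw [Real.exp_neg]; ring
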